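/- For all real E and E', (tanh(βE/2) + tanh(βE'/2))/(E + E') ≤ (1/2)(tanh(βE/2)/E + tanh(βE'/2)/E'), where β > 0 and the left side is interpreted as its limit (β/2)·cosh^{-2}(βE/2) when E' = -E, and tanh(βE/2)/E is interpreted as β/2 when E = 0. -/

import Mathlib

/-- `Ξ_β(E,E')`, with the convention `Ξ_β(E,-E) = (β/2)·cosh⁻²(βE/2)`. -/
noncomputable def Xi (β E E' : ℝ) : ℝ :=
  if E + E' = 0 then (β / 2) / Real.cosh (β * E / 2) ^ 2
  else (Real.tanh (β * E / 2) + Real.tanh (β * E' / 2)) / (E + E')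

/-- `χ_β(E)`, with the convention `χ_β(0) = β/2`. -/
noncomputable def chi (β E : ℝ) : ℝ :=
  if E = 0 then β / 2 else Real.tanh (β * E / 2) / E

private lemma self_le_sinh_mul_cosh {t : ℝ} (ht : 0 ≤ t) :
    t ≤ Real.sinh t * Real.cosh t := by
  have h1 : 2 * t ≤ Real.sinh (2 * t) := Real.self_le_sinh_iff.mpr (by linarith)
  have h2 : Real.sinh (2 * t) = 2 * Real.sinh t * Real.cosh t := Real.sinh_two_mul t
  linarith

private lemma key_div_cosh_sq_le_tanh {t : ℝ} (ht : 0 ≤ t) :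
    t / Real.cosh t ^ 2 ≤ Real.tanh t := by
  have hc := Real.cosh_pos t
  rw [Real.tanh_eq_sinh_div_cosh, div_le_div_iff₀ (by positivity) hc]
  nlinarith [self_le_sinh_mul_cosh ht]

private lemma sinh_le_mul_cosh {t : ℝ} (ht : 0 ≤ t) : Real.sinh t ≤ t * Real.cosh t := by
  set g : ℝ → ℝ := fun x => x * Real.cosh x - Real.sinh x with hg
  have hderiv : ∀ x : ℝ, HasDerivAt g (x * Real.sinh x) x := by
    intro x
    have h : HasDerivAt (fun y => y * Real.cosh y - Real.sinh y)
        (1 * Real.cosh x + x * Real.sinh x - Real.cosh x) x := ((hasDerivAt_id x).mul (Real.hasDerivAt_cosh x)).sub (Real.hasDerivAt_sinh x)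
    convert h using 1
    simp [id_eq]
  have hmono : MonotoneOn g (Set.Ici (0 : ℝ)) := by
    apply monotoneOn_of_deriv_nonneg (convex_Ici 0)
    · exact fun x _ => ((hderiv x).continuousAt).continuousWithinAt
    · exact fun x _ => ((hderiv x).differentiableAt).differentiableWithinAt
    · intro x hx
      rw [interior_Ici] at hx
      rw [(hderiv x).deriv]
      exact mul_nonneg (le_of_lt hx) (Real.sinh_nonneg_iff.mpr (le_of_lt hx))
  have h0 : g 0 ≤ g t := hmono (by simp) ht ht
  simp only [hg, zero_mul, Real.cosh_zero, Real.sinh_zero, sub_zero, zero_sub, neg_zero] at h0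
  linarith

private lemma tanh_le_self {t : ℝ} (ht : 0 ≤ t) : Real.tanh t ≤ t := by
  rw [Real.tanh_eq_sinh_div_cosh, div_le_iff₀ (Real.cosh_pos t)]
  exact sinh_le_mul_cosh ht

private lemma hasDerivAt_tanh (x : ℝ) :
    HasDerivAt Real.tanh (1 / Real.cosh x ^ 2) x := by
  have hc := Real.cosh_pos x
  have h : HasDerivAt (fun y => Real.sinh y / Real.cosh y)
      ((Real.cosh x * Real.cosh x - Real.sinh x * Real.sinh x) / Real.cosh x ^ 2) x :=
    (Real.hasDerivAt_sinh x).div (Real.hasDerivAt_cosh x) (ne_of_gt hc)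
  have he : Real.tanh = fun y => Real.sinh y / Real.cosh y :=
    funext fun y => Real.tanh_eq_sinh_div_cosh y
  rw [he]
  convert h using 1
  have := Real.cosh_sq_sub_sinh_sq x
  field_simp
  nlinarith

private lemma tanh_div_anti {a b : ℝ} (ha : 0 < a) (hab : a ≤ b) :
    Real.tanh b / b ≤ Real.tanh a / a := by
  have hderiv : ∀ x : ℝ, x ≠ 0 →
      HasDerivAt (fun y => Real.tanh y / y)
        ((1 / Real.cosh x ^ 2 * x - Real.tanh x * 1) / x ^ 2) x := by
    intro x hx
    exact (hasDerivAt_tanh x).div (hasDerivAt_id x) hx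
  have H : AntitoneOn (fun y => Real.tanh y / y) (Set.Icc a b) := by
    apply antitoneOn_of_deriv_nonpos (convex_Icc a b)
    · intro x hx
      have hx0 : x ≠ 0 := ne_of_gt (lt_of_lt_of_le ha hx.1)
      exact ((hderiv x hx0).continuousAt).continuousWithinAt
    · intro x hx
      rw [interior_Icc] at hx
      have hx0 : x ≠ 0 := ne_of_gt (lt_trans ha hx.1)
      exact ((hderiv x hx0).differentiableAt).differentiableWithinAt
    · intro x hx
      rw [interior_Icc] at hx
      have hx0 : 0 < x := lt_trans ha hx.1
      rw [(hderiv x (ne_of_gt hx0)).deriv]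
      apply div_nonpos_of_nonpos_of_nonneg _ (sq_nonneg x)
      have hkey := key_div_cosh_sq_le_tanh hx0.le
      have hc := Real.cosh_pos x
      have : 1 / Real.cosh x ^ 2 * x = x / Real.cosh x ^ 2 := by ring
      rw [this]
      linarith
  exact H ⟨le_refl a, hab⟩ ⟨hab, le_refl b⟩ hab

private lemma chi_neg (β E : ℝ) : chi β (-E) = chi β E := by
  unfold chi
  rcases eq_or_ne E 0 with h | h
  · simp [h]
  · rw [if_neg (neg_ne_zero.mpr h), if_neg h,
      show β * -E / 2 = -(β * E / 2) by ring, Real.tanh_neg, neg_div_neg_eq]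

private lemma chi_abs (β E : ℝ) : chi β |E| = chi β E := by
  rcases abs_cases E with ⟨h, _⟩ | ⟨h, _⟩
  · rw [h]
  · rw [h, chi_neg]

private lemma chi_zero (β : ℝ) : chi β 0 = β / 2 := by simp [chi]

private lemma chi_of_ne (β : ℝ) {E : ℝ} (h : E ≠ 0) :
    chi β E = Real.tanh (β * E / 2) / E := by simp [chi, h]

private lemma chi_anti_nonneg {β : ℝ} (hβ : 0 < β) {a b : ℝ} (ha : 0 ≤ a) (hab : a ≤ b) :
    chi β b ≤ chi β a := by
  rcases eq_or_lt_of_le ha with rfl | ha'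
  · rcases eq_or_lt_of_le hab with rfl | hb'
    · exact le_refl _
    · rw [chi_zero, chi_of_ne β (ne_of_gt hb')]
      have hw : 0 ≤ β * b / 2 := by positivity
      have := tanh_le_self hw
      rw [div_le_iff₀ hb']
      nlinarith
  · -- 0 < a ≤ b
    have hb' : 0 < b := lt_of_lt_of_le ha' hab
    rw [chi_of_ne β (ne_of_gt ha'), chi_of_ne β (ne_of_gt hb')]
    have hwa : 0 < β * a / 2 := by positivity
    have hwab : β * a / 2 ≤ β * b / 2 := by nlinarith
    have h := tanh_div_anti hwa hwab
    have ea : Real.tanh (β * a / 2) / a = (β / 2) * (Real.tanh (β * a / 2) / (β * a / 2)) := by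
      field_simp
    have eb : Real.tanh (β * b / 2) / b = (β / 2) * (Real.tanh (β * b / 2) / (β * b / 2)) := by
      field_simp
    rw [ea, eb]
    nlinarith

private lemma chi_anti {β : ℝ} (hβ : 0 < β) {a b : ℝ} (h : |a| ≤ |b|) :
    chi β b ≤ chi β a := by
  rw [← chi_abs β a, ← chi_abs β b]
  exact chi_anti_nonneg hβ (abs_nonneg a) h

private lemma case_diag {β : ℝ} (hβ : 0 < β) (E : ℝ) :
    (β / 2) / Real.cosh (β * E / 2) ^ 2 ≤ chi β E := by
  rcases eq_or_ne E 0 with rfl | hE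
  · simp [chi_zero]
  · rw [← chi_abs β E, chi_of_ne β (by positivity : |E| ≠ 0)]
    have hcosh : Real.cosh (β * E / 2) = Real.cosh (β * |E| / 2) := by
      rcases abs_cases E with ⟨h, _⟩ | ⟨h, _⟩
      · rw [h]
      · rw [h, show β * -E / 2 = -(β * E / 2) by ring, Real.cosh_neg]
    rw [hcosh]
    have hE' : 0 < |E| := abs_pos.mpr hE
    have hw : 0 ≤ β * |E| / 2 := by positivity
    have hkey := self_le_sinh_mul_cosh hw
    have hc := Real.cosh_pos (β * |E| / 2)
    have htc : Real.tanh (β * |E| / 2) * Real.cosh (β * |E| / 2) ^ 2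
        = Real.sinh (β * |E| / 2) * Real.cosh (β * |E| / 2) := by
      rw [Real.tanh_eq_sinh_div_cosh]
      field_simp
    rw [div_le_div_iff₀ (by positivity) (by positivity), htc]
    nlinarith

theorem Xi_le_half_add_chi (β : ℝ) (hβ : 0 < β) (E E' : ℝ) :
    Xi β E E' ≤ (1 / 2) * (chi β E + chi β E') := by
  unfold Xi
  by_cases h0 : E + E' = 0
  · rw [if_pos h0]
    have hE' : E' = -E := by linarith
    rw [hE', chi_neg]
    have := case_diag hβ E
    linarith
  · rw [if_neg h0]
    rcases eq_or_ne E 0 with rfl | hE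
    · have hE' : E' ≠ 0 := by simpa using h0
      rw [Real.tanh_eq_sinh_div_cosh]
      simp only [mul_zero, zero_div, Real.sinh_zero, Real.cosh_zero, zero_add]
      rw [chi_zero, ← chi_of_ne β hE']
      have h1 : chi β E' ≤ β / 2 := by
        rw [← chi_zero β]
        exact chi_anti hβ (by simp)
      linarith
    rcases eq_or_ne E' 0 with rfl | hE'
    · rw [show Real.tanh (β * 0 / 2) = 0 by simp, add_zero, add_zero, ← chi_of_ne β hE]
      rw [chi_zero]
      have h1 : chi β E ≤ β / 2 := by
        rw [← chi_zero β]
        exact chi_anti hβ (by simp)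
      linarith
    · rw [show Real.tanh (β * E / 2) = E * chi β E by rw [chi_of_ne β hE]; field_simp,
        show Real.tanh (β * E' / 2) = E' * chi β E' by rw [chi_of_ne β hE']; field_simp]
      rcases lt_or_gt_of_ne h0 with hsum | hsum
      · rw [div_le_iff_of_neg hsum]
        rcases le_total E E' with h | h
        · have habs : |E'| ≤ |E| := by
            rw [← abs_neg E]
            exact abs_le_abs (by linarith) (by linarith)
          have hc := chi_anti hβ habs
          nlinarith [mul_nonneg (sub_nonneg.mpr h) (sub_nonneg.mpr hc)]
        · have habs : |E| ≤ |E'| := by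
            rw [← abs_neg E']
            exact abs_le_abs (by linarith) (by linarith)
          have hc := chi_anti hβ habs
          nlinarith [mul_nonneg (sub_nonneg.mpr h) (sub_nonneg.mpr hc)]
      · rw [div_le_iff₀ hsum]
        rcases le_total E E' with h | h
        · have habs : |E| ≤ |E'| := abs_le_abs h (by linarith)
          have hc := chi_anti hβ habs
          nlinarith [mul_nonneg (sub_nonneg.mpr h) (sub_nonneg.mpr hc)]
        · have habs : |E'| ≤ |E| := abs_le_abs h (by linarith)
          have hc := chi_anti hβ habs
          nlinarith [mul_nonneg (sub_nonneg.mpr h) (sub_nonneg.mpr hc)]
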